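/- Let λ, μ, ν ∈ ℤⁿ be dominant and let M ∈ MV_{λμ}^ν. Then for all integers i, j, k ≥ 0 with i + j + k = n, the minimum of M(α) + Σ_{b∈β} ν_b over all pairs of disjoint subsets α, β ⊆ {1,…,n} with |α| = i and |β| = j is equal to M({k+1,…,k+i}) + ν_{k+i+1} + … + ν_n; i.e. the minimum is attained at α = {k+1,…,k+i}, β = {k+i+1,…,n}. -/

import Mathlib

/-- A `GL_n` BZ datum: a function from subsets of `{1,…,n}` (encoded as `Finset (Fin n)`)
to `ℤ` with `M ∅ = 0`, satisfying the tropical Plücker relations and the edge inequalities. -/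
def IsBZDatum (n : ℕ) (M : Finset (Fin n) → ℤ) : Prop :=
  M ∅ = 0 ∧
  (∀ (S : Finset (Fin n)) (a b c : Fin n), a < b → b < c → a ∉ S → b ∉ S → c ∉ S →
    M (insert a (insert c S)) + M (insert b S) =
      min (M (insert a (insert b S)) + M (insert c S))
        (M (insert a S) + M (insert b (insert c S)))) ∧
  (∀ (S : Finset (Fin n)) (a b : Fin n), a ≠ b → a ∉ S → b ∉ S →
    M (insert a S) + M (insert b S) ≤ M S + M (insert a (insert b S)))

/-- The polytope `P(M) = {α ∈ ℝⁿ : Σ_{a∈S} α_a ≥ M(S)` for all nonempty proper `S`, and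
`Σ_a α_a = M({1,…,n})}`. -/
def BZPolytope (n : ℕ) (M : Finset (Fin n) → ℤ) : Set (Fin n → ℝ) :=
  {α | (∀ S : Finset (Fin n), S.Nonempty → S ≠ Finset.univ → (M S : ℝ) ≤ ∑ a ∈ S, α a) ∧
    ∑ a, α a = (M Finset.univ : ℝ)}

/-- `conv(W·λ)`: the convex hull in `ℝⁿ` of all coordinate permutations of `λ ∈ ℤⁿ`. -/
noncomputable def permHull (n : ℕ) (lam : Fin n → ℤ) : Set (Fin n → ℝ) :=
  convexHull ℝ {x : Fin n → ℝ | ∃ σ : Equiv.Perm (Fin n), ∀ a, x a = (lam (σ a) : ℝ)}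

/-- The interval `{k+1, …, k+i} ⊆ {1,…,n}` in 1-based notation, encoded as the set of
0-based indices `a` with `k ≤ a < k + i` in `Fin n` (empty if `i = 0`). -/
def intervalFinset (n k i : ℕ) : Finset (Fin n) :=
  Finset.univ.filter fun a => k ≤ a.val ∧ a.val < k + i

/-- The tail sum `ν_{m+1} + … + ν_n` (1-based), i.e. the sum of `ν a` over 0-based
indices `a ≥ m`. -/
def tailSum (n : ℕ) (ν : Fin n → ℤ) (m : ℕ) : ℤ :=
  ∑ a ∈ Finset.univ.filter (fun a : Fin n => m ≤ a.val), ν a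

/-- Membership in `MV_{λμ}^ν`: `M` is a BZ datum with
`M({k+1,…,n}) = λ_{k+1}+…+λ_n` for `0 ≤ k ≤ n−1`,
`M({1,…,i}) = (ν_1−μ_1)+…+(ν_i−μ_i)` for `1 ≤ i ≤ n−1`,
`P(M) ⊆ conv(W·λ)`, and `P(M) ⊆ ν − conv(W·μ)`. -/
def IsMVDatum (n : ℕ) (lam mu nu : Fin n → ℤ) (M : Finset (Fin n) → ℤ) : Prop :=
  IsBZDatum n M ∧
  (∀ k : ℕ, k < n →
    M (Finset.univ.filter fun a : Fin n => k ≤ a.val) =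
      ∑ a ∈ Finset.univ.filter (fun a : Fin n => k ≤ a.val), lam a) ∧
  (∀ i : ℕ, 1 ≤ i → i < n →
    M (Finset.univ.filter fun a : Fin n => a.val < i) =
      ∑ a ∈ Finset.univ.filter (fun a : Fin n => a.val < i), (nu a - mu a)) ∧
  BZPolytope n M ⊆ permHull n lam ∧
  BZPolytope n M ⊆ (fun x => (fun a => (nu a : ℝ)) - x) '' permHull n mu

/-- `F : Δ_n → ℤ` is a hive (min convention): whenever all points appearing lie in `Δ_n`,
(i)   `F(i,j,k) + F(i,j+1,k−1) ≤ F(i+1,j,k−1) + F(i−1,j+1,k)`;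
(ii)  `F(i,j,k) + F(i+1,j−1,k) ≤ F(i+1,j,k−1) + F(i,j−1,k+1)`;
(iii) `F(i,j,k) + F(i+1,j,k−1) ≤ F(i,j+1,k−1) + F(i+1,j−1,k)`.
The indices below are shifted so that no natural subtraction appears. -/
def IsHive (n : ℕ) (F : ℕ → ℕ → ℕ → ℤ) : Prop :=
  (∀ i j k : ℕ, i + j + k + 2 = n →
    F (i + 1) j (k + 1) + F (i + 1) (j + 1) k ≤ F (i + 2) j k + F i (j + 1) (k + 1)) ∧
  (∀ i j k : ℕ, i + j + k + 2 = n →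
    F i (j + 1) (k + 1) + F (i + 1) j (k + 1) ≤ F (i + 1) (j + 1) k + F i j (k + 2)) ∧
  (∀ i j k : ℕ, i + j + k + 2 = n →
    F i (j + 1) (k + 1) + F (i + 1) (j + 1) k ≤ F i (j + 2) k + F (i + 1) j (k + 1))

/-- `F` has boundary `(λ, μ, ν)`: in 1-based notation,
`λ_k = F(n−k+1,0,k−1) − F(n−k,0,k)`, `μ_i = F(i−1,n−i+1,0) − F(i,n−i,0)`, and
`ν_k = F(0,n−k+1,k−1) − F(0,n−k,k)` (written below with 0-based indices `Fin n`). -/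
def HasBoundary (n : ℕ) (F : ℕ → ℕ → ℕ → ℤ) (lam mu nu : Fin n → ℤ) : Prop :=
  (∀ k : Fin n, F (n - k.val) 0 k.val - F (n - k.val - 1) 0 (k.val + 1) = lam k) ∧
  (∀ i : Fin n, F i.val (n - i.val) 0 - F (i.val + 1) (n - i.val - 1) 0 = mu i) ∧
  (∀ k : Fin n, F 0 (n - k.val) k.val - F 0 (n - k.val - 1) (k.val + 1) = nu k)

/-- Cardinality of a filter on `Fin n` by a predicate on values. -/
lemma bzCardValFilter (n : ℕ) (P : ℕ → Prop) [DecidablePred P] :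
    (Finset.univ.filter (fun a : Fin n => P a.val)).card
      = ((Finset.range n).filter P).card := by
  apply Finset.card_bij (fun (a : Fin n) _ => a.val)
  · intro a ha
    simp only [Finset.mem_filter, Finset.mem_range]
    exact ⟨a.isLt, (Finset.mem_filter.mp ha).2⟩
  · intro a _ b _ h
    exact Fin.val_injective h
  · intro v hv
    simp only [Finset.mem_filter, Finset.mem_range] at hv
    exact ⟨⟨v, hv.1⟩, by simp [hv.2], rfl⟩

/-- Supermodular increment monotonicity, from the edge inequalities. -/
lemma bzIncrMono {n : ℕ} {M : Finset (Fin n) → ℤ}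
    (hedge : ∀ (S : Finset (Fin n)) (a b : Fin n), a ≠ b → a ∉ S → b ∉ S →
      M (insert a S) + M (insert b S) ≤ M S + M (insert a (insert b S))) :
    ∀ (k : ℕ) (A B : Finset (Fin n)) (c : Fin n), A ⊆ B → c ∉ B → (B \ A).card = k →
      M (insert c A) + M B ≤ M A + M (insert c B) := by
  intro k
  induction k with
  | zero =>
    intro A B c hAB hcB hcard
    have hBA : B ⊆ A := Finset.sdiff_eq_empty_iff_subset.mp (Finset.card_eq_zero.mp hcard)
    have : A = B := Finset.Subset.antisymm hAB hBA
    subst this; omega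
  | succ k ih =>
    intro A B c hAB hcB hcard
    have hne : (B \ A).Nonempty := by
      rw [← Finset.card_pos, hcard]; omega
    obtain ⟨d, hd⟩ := hne
    have hdB : d ∈ B := (Finset.mem_sdiff.mp hd).1
    have hdA : d ∉ A := (Finset.mem_sdiff.mp hd).2
    have hcd : c ≠ d := fun h => hcB (h ▸ hdB)
    have hcA : c ∉ A := fun h => hcB (hAB h)
    -- edge inequality: M (insert c A) + M (insert d A) ≤ M A + M (insert c (insert d A))
    have e1 := hedge A c d hcd hcA hdA
    -- IH with A' = insert d A
    have hsub : insert d A ⊆ B := Finset.insert_subset hdB hAB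
    have hcB' : c ∉ insert d A := by
      simp only [Finset.mem_insert]
      push_neg
      exact ⟨hcd, hcA⟩
    have hcard' : (B \ insert d A).card = k := by
      have : B \ insert d A = (B \ A).erase d := by
        ext x
        simp only [Finset.mem_sdiff, Finset.mem_insert, Finset.mem_erase]
        tauto
      rw [this, Finset.card_erase_of_mem hd, hcard]
      omega
    have e2 := ih (insert d A) B c hsub hcB hcard'
    omega
/-- Greedy chain point adapted to `T`: an integer vector in `P(M)` whose `T`-sum is `M T`. -/
lemma bzChainVec {n : ℕ} {M : Finset (Fin n) → ℤ} (hM0 : M ∅ = 0)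
    (hedge : ∀ (S : Finset (Fin n)) (a b : Fin n), a ≠ b → a ∉ S → b ∉ S →
      M (insert a S) + M (insert b S) ≤ M S + M (insert a (insert b S)))
    (T : Finset (Fin n)) :
    ∃ x : Fin n → ℤ, (∀ S, M S ≤ ∑ a ∈ S, x a) ∧ (∑ a, x a = M Finset.univ) ∧
      (∑ a ∈ T, x a = M T) := by
  classical
  set t := T.card with ht
  have hmono : ∀ (U : Finset (Fin n)) (a b : Fin n), a ∈ U → a < b →
      (U.filter (fun x => x < a)).card < (U.filter (fun x => x < b)).card := by
    intro U a b ha hab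
    apply Finset.card_lt_card
    constructor
    · intro y hy
      simp only [Finset.mem_filter] at hy ⊢
      exact ⟨hy.1, lt_trans hy.2 hab⟩
    · intro hsub
      have h1 : a ∈ U.filter (fun x => x < b) := Finset.mem_filter.mpr ⟨ha, hab⟩
      have h2 := hsub h1
      simp only [Finset.mem_filter] at h2
      exact lt_irrefl a h2.2
  set rk : Fin n → ℕ := fun a =>
    if a ∈ T then (T.filter (fun x => x < a)).card else t + (Tᶜ.filter (fun x => x < a)).card with hrk
  have hrkT : ∀ a ∈ T, rk a < t := by
    intro a ha
    simp only [hrk, if_pos ha]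
    apply Finset.card_lt_card
    constructor
    · exact Finset.filter_subset _ _
    · intro hsub
      have := hsub ha
      simp only [Finset.mem_filter] at this
      exact lt_irrefl a this.2
  have hrkC : ∀ a ∉ T, t ≤ rk a ∧ rk a < n := by
    intro a ha
    simp only [hrk, if_neg ha]
    refine ⟨Nat.le_add_right _ _, ?_⟩
    have h1 : (Tᶜ.filter (fun x => x < a)).card < Tᶜ.card := by
      apply Finset.card_lt_card
      constructor
      · exact Finset.filter_subset _ _
      · intro hsub
        have := hsub (Finset.mem_compl.mpr ha)
        simp only [Finset.mem_filter] at this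
        exact lt_irrefl a this.2
    have h2 : Tᶜ.card = n - t := by
      rw [Finset.card_compl]
      simp [ht]
    omega
  have hlt : ∀ a, rk a < n := by
    intro a
    by_cases ha : a ∈ T
    · exact lt_of_lt_of_le (hrkT a ha) (by simpa [ht] using Finset.card_le_univ T)
    · exact (hrkC a ha).2
  have hinj : Function.Injective rk := by
    intro a b hab
    by_contra hne
    have key : ∀ p q : Fin n, p < q → rk p ≠ rk q := by
      intro p q hpq
      by_cases hpT : p ∈ T <;> by_cases hqT : q ∈ T
      · have := hmono T p q hpT hpq
        simp only [hrk, if_pos hpT, if_pos hqT]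
        omega
      · have h1 := hrkT p hpT
        have h2 := (hrkC q hqT).1
        omega
      · have h1 := hrkT q hqT
        have h2 := (hrkC p hpT).1
        omega
      · have := hmono Tᶜ p q (Finset.mem_compl.mpr hpT) hpq
        simp only [hrk, if_neg hpT, if_neg hqT]
        omega
    rcases lt_trichotomy a b with h | h | h
    · exact key a b h hab
    · exact hne h
    · exact key b a h hab.symm
  have hsurj : ∀ m, m < n → ∃ a, rk a = m := by
    intro m hm
    have himg : Finset.image rk Finset.univ = Finset.range n := by
      apply Finset.eq_of_subset_of_card_le
      · intro v hv
        simp only [Finset.mem_image] at hv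
        obtain ⟨a, _, rfl⟩ := hv
        exact Finset.mem_range.mpr (hlt a)
      · rw [Finset.card_range, Finset.card_image_of_injective _ hinj]
        simp
    have : m ∈ Finset.image rk Finset.univ := by
      rw [himg]; exact Finset.mem_range.mpr hm
    simpa using this
  set C : ℕ → Finset (Fin n) := fun m => Finset.univ.filter (fun a => rk a < m) with hC
  have hC0 : C 0 = ∅ := by
    simp [hC]
  have hCn : C n = Finset.univ := by
    simp only [hC]
    apply Finset.filter_true_of_mem
    intro a _
    exact hlt a
  have hCT : C t = T := by
    ext a
    simp only [hC, Finset.mem_filter, Finset.mem_univ, true_and]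
    constructor
    · intro h
      by_contra ha
      exact absurd h (not_lt.mpr (hrkC a ha).1)
    · intro h
      exact hrkT a h
  have hstep : ∀ m, ∀ a : Fin n, rk a = m → C (m + 1) = insert a (C m) ∧ a ∉ C m := by
    intro m a ham
    constructor
    · ext x
      simp only [hC, Finset.mem_filter, Finset.mem_univ, true_and, Finset.mem_insert]
      constructor
      · intro h
        rcases Nat.lt_succ_iff_lt_or_eq.mp h with h' | h'
        · exact Or.inr h'
        · exact Or.inl (hinj (h'.trans ham.symm))
      · rintro (rfl | h)
        · omega
        · omega
    · simp [hC, ham]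
  set x : Fin n → ℤ := fun a => M (C (rk a + 1)) - M (C (rk a)) with hx
  have htel : ∀ m, m ≤ n → ∑ a ∈ C m, x a = M (C m) := by
    intro m
    induction m with
    | zero => intro _; rw [hC0, hM0]; simp
    | succ m ih =>
      intro hm
      obtain ⟨a, ha⟩ := hsurj m (by omega)
      obtain ⟨hins, hnot⟩ := hstep m a ha
      rw [hins, Finset.sum_insert hnot, ih (by omega)]
      simp only [hx, ha]
      rw [← hins]
      ring
  have hfeas : ∀ S, M S ≤ ∑ a ∈ S, x a := by
    intro S
    have key : ∀ m, m ≤ n → M (S ∩ C m) ≤ ∑ a ∈ S ∩ C m, x a := by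
      intro m
      induction m with
      | zero => intro _; rw [hC0, Finset.inter_empty, hM0]; simp
      | succ m ih =>
        intro hm
        obtain ⟨a, ha⟩ := hsurj m (by omega)
        obtain ⟨hins, hnot⟩ := hstep m a ha
        by_cases haS : a ∈ S
        · have hins2 : S ∩ C (m + 1) = insert a (S ∩ C m) := by
            rw [hins]
            ext y
            simp only [Finset.mem_inter, Finset.mem_insert]
            constructor
            · rintro ⟨hy, rfl | hy2⟩
              · exact Or.inl rfl
              · exact Or.inr ⟨hy, hy2⟩
            · rintro (rfl | ⟨hy, hy2⟩)
              · exact ⟨haS, Or.inl rfl⟩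
              · exact ⟨hy, Or.inr hy2⟩
          have hnot2 : a ∉ S ∩ C m := fun h => hnot (Finset.mem_inter.mp h).2
          have hincr := bzIncrMono hedge ((C m \ (S ∩ C m)).card) (S ∩ C m) (C m) a
            Finset.inter_subset_right hnot rfl
          have hxa : x a = M (C (m + 1)) - M (C m) := by simp only [hx, ha]
          rw [hins] at hxa
          rw [hins2, Finset.sum_insert hnot2]
          have := ih (by omega)
          omega
        · have hins2 : S ∩ C (m + 1) = S ∩ C m := by
            rw [hins]
            ext y
            simp only [Finset.mem_inter, Finset.mem_insert]
            constructor
            · rintro ⟨hy, rfl | hy2⟩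
              · exact absurd hy haS
              · exact ⟨hy, hy2⟩
            · rintro ⟨hy, hy2⟩
              exact ⟨hy, Or.inr hy2⟩
          rw [hins2]
          exact ih (by omega)
    have := key n (le_refl n)
    rw [hCn, Finset.inter_univ] at this
    exact this
  refine ⟨x, hfeas, ?_, ?_⟩
  · have := htel n (le_refl n)
    rw [hCn] at this
    simpa using this
  · have := htel t (by simpa [ht] using Finset.card_le_univ T)
    rw [hCT] at this
    exact this
/-- Sum of an antitone sequence over any `t`-subset is at least the sum over the top `t`
indices below `m`. -/
lemma bzSumTail {n : ℕ} {lam : Fin n → ℤ}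
    (hlam : ∀ a b : Fin n, a ≤ b → lam b ≤ lam a) :
    ∀ (t : ℕ) (U : Finset (Fin n)) (m : ℕ), U.card = t → m ≤ n → (∀ u ∈ U, u.val < m) →
      ∑ a ∈ Finset.univ.filter (fun a : Fin n => m - t ≤ a.val ∧ a.val < m), lam a
        ≤ ∑ u ∈ U, lam u := by
  intro t
  induction t with
  | zero =>
    intro U m hU hm hbd
    have h1 : Finset.univ.filter (fun a : Fin n => m - 0 ≤ a.val ∧ a.val < m) = ∅ := by
      apply Finset.filter_false_of_mem
      intro a _
      omega
    rw [h1, Finset.card_eq_zero.mp hU]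
  | succ t ih =>
    intro U m hU hm hbd
    have hne : U.Nonempty := by rw [← Finset.card_pos, hU]; omega
    set u := U.max' hne with hu
    have huU : u ∈ U := U.max'_mem hne
    have hum : u.val < m := hbd u huU
    have hm1 : 1 ≤ m := by omega
    set U' := U.erase u with hU'
    have hcard' : U'.card = t := by
      rw [hU', Finset.card_erase_of_mem huU, hU]
      omega
    have hbd' : ∀ v ∈ U', v.val < m - 1 := by
      intro v hv
      have hvu : v ≠ u := Finset.ne_of_mem_erase hv
      have : v ≤ u := U.le_max' v (Finset.mem_of_mem_erase hv)
      have : v < u := lt_of_le_of_ne this hvu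
      omega
    have hih := ih U' (m - 1) hcard' (by omega) hbd'
    have hen : m - 1 < n := by omega
    set e : Fin n := ⟨m - 1, hen⟩ with he
    have hkey : Finset.univ.filter (fun a : Fin n => m - (t + 1) ≤ a.val ∧ a.val < m)
        = insert e (Finset.univ.filter (fun a : Fin n => m - 1 - t ≤ a.val ∧ a.val < m - 1)) := by
      ext a
      simp only [Finset.mem_filter, Finset.mem_univ, true_and, Finset.mem_insert, Fin.ext_iff, he]
      omega
    have hnot : e ∉ Finset.univ.filter (fun a : Fin n => m - 1 - t ≤ a.val ∧ a.val < m - 1) := by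
      simp [he]
    rw [hkey, Finset.sum_insert hnot]
    have hle : lam e ≤ lam u := by
      apply hlam u e
      simp only [Fin.le_def, he]
      omega
    have hsum : lam u + ∑ v ∈ U', lam v = ∑ v ∈ U, lam v := Finset.add_sum_erase U lam huU
    omega

/-- Sum of an antitone sequence over any `t`-subset with indices `≥ m` is at most the sum
over indices in `[m, m+t)`. -/
lemma bzSumHead {n : ℕ} {mu : Fin n → ℤ}
    (hmu : ∀ a b : Fin n, a ≤ b → mu b ≤ mu a) :
    ∀ (t : ℕ) (U : Finset (Fin n)) (m : ℕ), U.card = t → (∀ u ∈ U, m ≤ u.val) →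
      ∑ u ∈ U, mu u
        ≤ ∑ a ∈ Finset.univ.filter (fun a : Fin n => m ≤ a.val ∧ a.val < m + t), mu a := by
  intro t
  induction t with
  | zero =>
    intro U m hU hbd
    have h1 : Finset.univ.filter (fun a : Fin n => m ≤ a.val ∧ a.val < m + 0) = ∅ := by
      apply Finset.filter_false_of_mem
      intro a _
      omega
    rw [h1, Finset.card_eq_zero.mp hU]
  | succ t ih =>
    intro U m hU hbd
    have hne : U.Nonempty := by rw [← Finset.card_pos, hU]; omega
    set u := U.min' hne with hu
    have huU : u ∈ U := U.min'_mem hne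
    have hum : m ≤ u.val := hbd u huU
    set U' := U.erase u with hU'
    have hcard' : U'.card = t := by
      rw [hU', Finset.card_erase_of_mem huU, hU]
      omega
    have hbd' : ∀ v ∈ U', m + 1 ≤ v.val := by
      intro v hv
      have hvu : v ≠ u := Finset.ne_of_mem_erase hv
      have : u ≤ v := U.min'_le v (Finset.mem_of_mem_erase hv)
      have : u < v := lt_of_le_of_ne this (Ne.symm hvu)
      omega
    have hih := ih U' (m + 1) hcard' hbd'
    have hen : m < n := by
      have := u.isLt
      omega
    set e : Fin n := ⟨m, hen⟩ with he
    have hkey : Finset.univ.filter (fun a : Fin n => m ≤ a.val ∧ a.val < m + (t + 1))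
        = insert e (Finset.univ.filter (fun a : Fin n => m + 1 ≤ a.val ∧ a.val < m + 1 + t)) := by
      ext a
      simp only [Finset.mem_filter, Finset.mem_univ, true_and, Finset.mem_insert, Fin.ext_iff, he]
      omega
    have hnot : e ∉ Finset.univ.filter (fun a : Fin n => m + 1 ≤ a.val ∧ a.val < m + 1 + t) := by
      simp [he]
    rw [hkey, Finset.sum_insert hnot]
    have hle : mu u ≤ mu e := by
      apply hmu e u
      simp only [Fin.le_def, he]
      omega
    have hsum : mu u + ∑ v ∈ U', mu v = ∑ v ∈ U, mu v := Finset.add_sum_erase U mu huU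
    omega

/-- Points of `conv(W·λ)` satisfy the lower facet inequalities. -/
lemma bzHullLower {n : ℕ} {lam : Fin n → ℤ}
    (hlam : ∀ a b : Fin n, a ≤ b → lam b ≤ lam a) (T : Finset (Fin n)) :
    ∀ x ∈ permHull n lam,
      ((∑ a ∈ Finset.univ.filter (fun a : Fin n => n - T.card ≤ a.val), lam a : ℤ) : ℝ)
        ≤ ∑ a ∈ T, x a := by
  have hconv : Convex ℝ {y : Fin n → ℝ |
      ((∑ a ∈ Finset.univ.filter (fun a : Fin n => n - T.card ≤ a.val), lam a : ℤ) : ℝ)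
        ≤ ∑ a ∈ T, y a} := by
    apply convex_halfSpace_ge
    exact ⟨fun y z => Finset.sum_add_distrib, fun c y => by
      simp only [Pi.smul_apply, smul_eq_mul]
      rw [Finset.mul_sum]⟩
  intro x hx
  refine convexHull_min ?_ hconv hx
  rintro y ⟨σ, hy⟩
  simp only [Set.mem_setOf_eq]
  have h1 : ∑ a ∈ T, y a = ((∑ a ∈ T, lam (σ a) : ℤ) : ℝ) := by
    push_cast
    exact Finset.sum_congr rfl (fun a _ => hy a)
  rw [h1]
  have h2 : ∑ a ∈ T, lam (σ a) = ∑ u ∈ T.image σ, lam u := by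
    rw [Finset.sum_image (fun x _ y _ h => σ.injective h)]
  have h3 : (T.image σ).card = T.card := Finset.card_image_of_injective T σ.injective
  have h4 := bzSumTail hlam T.card (T.image σ) n h3 (le_refl n) (fun u _ => u.isLt)
  have h5 : Finset.univ.filter (fun a : Fin n => n - T.card ≤ a.val ∧ a.val < n)
      = Finset.univ.filter (fun a : Fin n => n - T.card ≤ a.val) := by
    apply Finset.filter_congr
    intro a _
    simp [a.isLt]
  rw [h5] at h4
  rw [h2]
  exact_mod_cast h4

/-- Points of `conv(W·μ)` satisfy the upper facet inequalities. -/
lemma bzHullUpper {n : ℕ} {mu : Fin n → ℤ}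
    (hmu : ∀ a b : Fin n, a ≤ b → mu b ≤ mu a) (T : Finset (Fin n)) :
    ∀ y ∈ permHull n mu,
      ∑ a ∈ T, y a
        ≤ ((∑ a ∈ Finset.univ.filter (fun a : Fin n => a.val < T.card), mu a : ℤ) : ℝ) := by
  have hconv : Convex ℝ {y : Fin n → ℝ |
      ∑ a ∈ T, y a
        ≤ ((∑ a ∈ Finset.univ.filter (fun a : Fin n => a.val < T.card), mu a : ℤ) : ℝ)} := by
    apply convex_halfSpace_le
    exact ⟨fun y z => Finset.sum_add_distrib, fun c y => by
      simp only [Pi.smul_apply, smul_eq_mul]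
      rw [Finset.mul_sum]⟩
  intro x hx
  refine convexHull_min ?_ hconv hx
  rintro y ⟨σ, hy⟩
  simp only [Set.mem_setOf_eq]
  have h1 : ∑ a ∈ T, y a = ((∑ a ∈ T, mu (σ a) : ℤ) : ℝ) := by
    push_cast
    exact Finset.sum_congr rfl (fun a _ => hy a)
  rw [h1]
  have h2 : ∑ a ∈ T, mu (σ a) = ∑ u ∈ T.image σ, mu u := by
    rw [Finset.sum_image (fun x _ y _ h => σ.injective h)]
  have h3 : (T.image σ).card = T.card := Finset.card_image_of_injective T σ.injective
  have h4 := bzSumHead hmu T.card (T.image σ) 0 h3 (fun u _ => Nat.zero_le _)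
  have h5 : Finset.univ.filter (fun a : Fin n => 0 ≤ a.val ∧ a.val < 0 + T.card)
      = Finset.univ.filter (fun a : Fin n => a.val < T.card) := by
    apply Finset.filter_congr
    intro a _
    simp
  rw [h5] at h4
  rw [h2]
  exact_mod_cast h4

/-- Lower bound `L2`: `M(T) ≥` sum of the `|T|` smallest `λ`'s. -/
lemma bzL2 {n : ℕ} {lam mu nu : Fin n → ℤ} {M : Finset (Fin n) → ℤ}
    (hMV : IsMVDatum n lam mu nu M)
    (hlam : ∀ a b : Fin n, a ≤ b → lam b ≤ lam a) (T : Finset (Fin n)) :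
    ∑ a ∈ Finset.univ.filter (fun a : Fin n => n - T.card ≤ a.val), lam a ≤ M T := by
  obtain ⟨x, hfeas, htot, hT⟩ := bzChainVec hMV.1.1 hMV.1.2.2 T
  set xr : Fin n → ℝ := fun a => ((x a : ℤ) : ℝ) with hxr
  have hmem : xr ∈ BZPolytope n M := by
    constructor
    · intro S _ _
      have := hfeas S
      simp only [hxr]
      push_cast
      exact_mod_cast this
    · simp only [hxr]
      push_cast
      exact_mod_cast htot
  have h1 : xr ∈ permHull n lam := hMV.2.2.2.1 hmem
  have h2 := bzHullLower hlam T xr h1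
  have h3 : ∑ a ∈ T, xr a = ((M T : ℤ) : ℝ) := by
    simp only [hxr]
    push_cast
    exact_mod_cast hT
  rw [h3] at h2
  exact_mod_cast h2

/-- Lower bound `L1`: `M(T) ≥ Σ_T ν −` sum of the `|T|` largest `μ`'s. -/
lemma bzL1 {n : ℕ} {lam mu nu : Fin n → ℤ} {M : Finset (Fin n) → ℤ}
    (hMV : IsMVDatum n lam mu nu M)
    (hmu : ∀ a b : Fin n, a ≤ b → mu b ≤ mu a) (T : Finset (Fin n)) :
    (∑ a ∈ T, nu a) - ∑ a ∈ Finset.univ.filter (fun a : Fin n => a.val < T.card), mu a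
      ≤ M T := by
  obtain ⟨x, hfeas, htot, hT⟩ := bzChainVec hMV.1.1 hMV.1.2.2 T
  set xr : Fin n → ℝ := fun a => ((x a : ℤ) : ℝ) with hxr
  have hmem : xr ∈ BZPolytope n M := by
    constructor
    · intro S _ _
      have := hfeas S
      simp only [hxr]
      push_cast
      exact_mod_cast this
    · simp only [hxr]
      push_cast
      exact_mod_cast htot
  have h2 := hMV.2.2.2.2 hmem
  obtain ⟨y, hy, hyx⟩ := h2
  have hyval : ∀ a, y a = ((nu a : ℤ) : ℝ) - xr a := by
    intro a
    have := congrFun hyx a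
    simp only [Pi.sub_apply] at this
    linarith [this]
  have h4 := bzHullUpper hmu T y hy
  have h5 : ∑ a ∈ T, y a = ((∑ a ∈ T, nu a : ℤ) : ℝ) - ((M T : ℤ) : ℝ) := by
    rw [Finset.sum_congr rfl (fun a _ => hyval a), Finset.sum_sub_distrib]
    have h6 : ∑ a ∈ T, xr a = ((M T : ℤ) : ℝ) := by
      simp only [hxr]
      push_cast
      exact_mod_cast hT
    rw [h6]
    push_cast
    ring
  rw [h5] at h4
  have : ((∑ a ∈ T, nu a : ℤ) : ℝ) - (M T : ℝ)
      ≤ ((∑ a ∈ Finset.univ.filter (fun a : Fin n => a.val < T.card), mu a : ℤ) : ℝ) := h4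
  have h7 : (((∑ a ∈ T, nu a) - ∑ a ∈ Finset.univ.filter (fun a : Fin n => a.val < T.card), mu a : ℤ) : ℝ) ≤ ((M T : ℤ) : ℝ) := by
    push_cast
    push_cast at this
    linarith
  exact_mod_cast h7
/-- Weighted encoding of a lexicographic 4-tuple measure. -/
def bzM (n x y z w : ℕ) : ℕ :=
  x * ((n+1)*(n+1)*(n+1)) + y * ((n+1)*(n+1)) + z * (n+1) + w

lemma bzMlt1 {n x X y z w Y Z W : ℕ} (hx : x < X) (hy : y ≤ n) (hz : z ≤ n) (hw : w ≤ n) :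
    bzM n x y z w < bzM n X Y Z W := by
  have h1 : y * ((n+1)*(n+1)) + z * (n+1) + w < (n+1)*(n+1)*(n+1) := by
    have e2 : y * ((n+1)*(n+1)) ≤ n * ((n+1)*(n+1)) := Nat.mul_le_mul_right _ hy
    have e3 : z * (n+1) ≤ n * (n+1) := Nat.mul_le_mul_right _ hz
    have e4 : n * ((n+1)*(n+1)) + n * (n+1) + n + 1 = (n+1)*(n+1)*(n+1) := by ring
    omega
  have h2 : (x + 1) * ((n+1)*(n+1)*(n+1)) ≤ X * ((n+1)*(n+1)*(n+1)) :=
    Nat.mul_le_mul_right _ hx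
  have e5 : (x + 1) * ((n+1)*(n+1)*(n+1)) = x * ((n+1)*(n+1)*(n+1)) + (n+1)*(n+1)*(n+1) := by
    ring
  unfold bzM
  omega

lemma bzMlt2 {n x y Y z w Z W : ℕ} (hy : y < Y) (hz : z ≤ n) (hw : w ≤ n) :
    bzM n x y z w < bzM n x Y Z W := by
  have h1 : z * (n+1) + w < (n+1)*(n+1) := by
    have e3 : z * (n+1) ≤ n * (n+1) := Nat.mul_le_mul_right _ hz
    have e4 : n * (n+1) + n + 1 = (n+1)*(n+1) := by ring
    omega
  have h2 : (y + 1) * ((n+1)*(n+1)) ≤ Y * ((n+1)*(n+1)) := Nat.mul_le_mul_right _ hy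
  have e5 : (y + 1) * ((n+1)*(n+1)) = y * ((n+1)*(n+1)) + (n+1)*(n+1) := by ring
  unfold bzM
  omega

lemma bzMlt3 {n x y z w Z W : ℕ} (hz : z < Z) (hw : w ≤ n) :
    bzM n x y z w < bzM n x y Z W := by
  have h2 : (z + 1) * (n+1) ≤ Z * (n+1) := Nat.mul_le_mul_right _ hz
  have e5 : (z + 1) * (n+1) = z * (n+1) + (n+1) := by ring
  unfold bzM
  omega

lemma bzMlt4 {n x y z w W : ℕ} (hw : w < W) : bzM n x y z w < bzM n x y z W := by
  unfold bzM
  omega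

lemma bzCardLe {n : ℕ} (S : Finset (Fin n)) (P : Fin n → Prop) [DecidablePred P] :
    (S.filter P).card ≤ n := by
  calc (S.filter P).card ≤ S.card := Finset.card_filter_le _ _
    _ ≤ Finset.univ.card := Finset.card_le_univ _
    _ = n := by simp

/-- Exchange lemma LM3: `M(S∪a) + ν_b ≤ M(S∪b) + ν_a` for `a < b` not in `S`. -/
lemma bzLM3 {n : ℕ} {lam mu nu : Fin n → ℤ} {M : Finset (Fin n) → ℤ}
    (hMV : IsMVDatum n lam mu nu M)
    (hmu : ∀ a b : Fin n, a ≤ b → mu b ≤ mu a) :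
    ∀ (N : ℕ) (S : Finset (Fin n)) (a b : Fin n), a ∉ S → b ∉ S → a < b →
      bzM n 0 (b.val - a.val) ((S.filter (fun x => b < x)).card)
        ((Sᶜ.filter (fun x => x < a)).card) ≤ N →
      M (insert a S) + nu b ≤ M (insert b S) + nu a := by
  intro N
  induction N with
  | zero =>
    intro S a b haS hbS hab hm
    exfalso
    have h1 : 1 ≤ b.val - a.val := by
      have := (Fin.lt_def).mp hab
      omega
    have h2 : (n+1)*(n+1) ≤ (b.val - a.val) * ((n+1)*(n+1)) := by
      calc (n+1)*(n+1) = 1 * ((n+1)*(n+1)) := by ring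
        _ ≤ (b.val - a.val) * ((n+1)*(n+1)) := Nat.mul_le_mul_right _ h1
    have h3 : 0 < (n+1)*(n+1) := Nat.mul_pos (Nat.succ_pos n) (Nat.succ_pos n)
    unfold bzM at hm
    omega
  | succ N ih =>
    intro S a b haS hbS hab hm
    have hvab : a.val < b.val := (Fin.lt_def).mp hab
    by_cases hmid : ∃ c, c ∉ S ∧ a < c ∧ c < b
    · obtain ⟨c, hcS, hac, hcb⟩ := hmid
      have hvac : a.val < c.val := (Fin.lt_def).mp hac
      have hvcb : c.val < b.val := (Fin.lt_def).mp hcb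
      have m1 : bzM n 0 (c.val - a.val) ((S.filter (fun x => c < x)).card)
          ((Sᶜ.filter (fun x => x < a)).card) ≤ N := by
        have := bzMlt2 (n := n) (x := 0) (y := c.val - a.val)
          (z := (S.filter (fun x => c < x)).card)
          (w := (Sᶜ.filter (fun x => x < a)).card)
          (Z := (S.filter (fun x => b < x)).card)
          (W := (Sᶜ.filter (fun x => x < a)).card)
          (show c.val - a.val < b.val - a.val by omega) (bzCardLe _ _) (bzCardLe _ _)
        omega
      have m2 : bzM n 0 (b.val - c.val) ((S.filter (fun x => b < x)).card)
          ((Sᶜ.filter (fun x => x < c)).card) ≤ N := by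
        have := bzMlt2 (n := n) (x := 0) (y := b.val - c.val)
          (z := (S.filter (fun x => b < x)).card)
          (w := (Sᶜ.filter (fun x => x < c)).card)
          (Z := (S.filter (fun x => b < x)).card)
          (W := (Sᶜ.filter (fun x => x < a)).card)
          (show b.val - c.val < b.val - a.val by omega) (bzCardLe _ _) (bzCardLe _ _)
        omega
      have h1 := ih S a c haS hcS hac m1
      have h2 := ih S c b hcS hbS hcb m2
      omega
    · by_cases hhi : ∃ d, d ∈ S ∧ b < d
      · obtain ⟨d, hdS, hbd⟩ := hhi
        set T := S.erase d with hT
        have haT : a ∉ T := fun h => haS (Finset.mem_of_mem_erase h)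
        have hbT : b ∉ T := fun h => hbS (Finset.mem_of_mem_erase h)
        have hdT : d ∉ T := Finset.notMem_erase d S
        have eS : insert d T = S := Finset.insert_erase hdS
        have hplk := hMV.1.2.1 T a b d hab hbd haT hbT hdT
        have key : M (insert a (insert d T)) + M (insert b T)
            ≤ M (insert a T) + M (insert b (insert d T)) := by
          rw [hplk]
          exact min_le_right _ _
        rw [eS] at key
        have hmT : bzM n 0 (b.val - a.val) ((T.filter (fun x => b < x)).card)
            ((Tᶜ.filter (fun x => x < a)).card) ≤ N := by
          have hz : (T.filter (fun x => b < x)).card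
              = (S.filter (fun x => b < x)).card - 1 := by
            rw [hT, Finset.filter_erase,
              Finset.card_erase_of_mem (Finset.mem_filter.mpr ⟨hdS, hbd⟩)]
          have hzpos : 1 ≤ (S.filter (fun x => b < x)).card :=
            Finset.card_pos.mpr ⟨d, Finset.mem_filter.mpr ⟨hdS, hbd⟩⟩
          have hw : (Tᶜ.filter (fun x => x < a)).card
              = (Sᶜ.filter (fun x => x < a)).card := by
            rw [hT, Finset.compl_erase, Finset.filter_insert,
              if_neg (show ¬ d < a from fun h => absurd (lt_trans hab hbd) (not_lt.mpr h.le))]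
          rw [hz, hw]
          have := bzMlt3 (n := n) (x := 0) (y := b.val - a.val)
            (z := (S.filter (fun x => b < x)).card - 1)
            (w := (Sᶜ.filter (fun x => x < a)).card)
            (W := (Sᶜ.filter (fun x => x < a)).card)
            (show (S.filter (fun x => b < x)).card - 1
                < (S.filter (fun x => b < x)).card by omega)
            (bzCardLe _ _)
          omega
        have h1 := ih T a b haT hbT hab hmT
        omega
      · by_cases hlo : ∃ c, c ∉ S ∧ c < a
        · obtain ⟨c, hcS, hca⟩ := hlo
          have hcb : c < b := lt_trans hca hab
          have hplk := hMV.1.2.1 S c a b hca hab hcS haS hbS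
          have key : M (insert c (insert b S)) + M (insert a S)
              ≤ M (insert c (insert a S)) + M (insert b S) := by
            rw [hplk]
            exact min_le_left _ _
          rw [Finset.insert_comm c b S, Finset.insert_comm c a S] at key
          have hacS : a ∉ insert c S := by
            simp only [Finset.mem_insert]
            push_neg
            exact ⟨ne_of_gt hca, haS⟩
          have hbcS : b ∉ insert c S := by
            simp only [Finset.mem_insert]
            push_neg
            exact ⟨ne_of_gt hcb, hbS⟩
          have hmT : bzM n 0 (b.val - a.val) (((insert c S).filter (fun x => b < x)).card)
              (((insert c S)ᶜ.filter (fun x => x < a)).card) ≤ N := by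
            have hz : ((insert c S).filter (fun x => b < x)).card
                = (S.filter (fun x => b < x)).card := by
              rw [Finset.filter_insert, if_neg (show ¬ b < c from not_lt.mpr hcb.le)]
            have hcmem : c ∈ Sᶜ.filter (fun x => x < a) :=
              Finset.mem_filter.mpr ⟨Finset.mem_compl.mpr hcS, hca⟩
            have hw : ((insert c S)ᶜ.filter (fun x => x < a)).card
                = (Sᶜ.filter (fun x => x < a)).card - 1 := by
              rw [Finset.compl_insert, Finset.filter_erase, Finset.card_erase_of_mem hcmem]
            have hwpos : 1 ≤ (Sᶜ.filter (fun x => x < a)).card :=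
              Finset.card_pos.mpr ⟨c, hcmem⟩
            rw [hz, hw]
            have := bzMlt4 (n := n) (x := 0) (y := b.val - a.val)
              (z := (S.filter (fun x => b < x)).card)
              (hw := show (Sᶜ.filter (fun x => x < a)).card - 1
                  < (Sᶜ.filter (fun x => x < a)).card by omega)
            omega
          have h1 := ih (insert c S) a b hacS hbcS hab hmT
          omega
        · -- base case: S = {x | x < b, x ≠ a}, use head boundary + L1
          push_neg at hmid hhi hlo
          have hH : insert a S = Finset.univ.filter (fun x : Fin n => x.val < b.val) := by
            ext x
            simp only [Finset.mem_insert, Finset.mem_filter, Finset.mem_univ, true_and]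
            constructor
            · rintro (rfl | hxS)
              · exact hvab
              · have hxb : x ≤ b := hhi x hxS
                have hxnb : x ≠ b := fun h => hbS (h ▸ hxS)
                have : x < b := lt_of_le_of_ne hxb hxnb
                exact (Fin.lt_def).mp this
            · intro hxb
              by_cases hxa : x = a
              · exact Or.inl hxa
              · right
                by_contra hxS
                have hax : a ≤ x := hlo x hxS
                have : a < x := lt_of_le_of_ne hax (Ne.symm hxa)
                have hbx : b ≤ x := hmid x hxS this
                have : b.val ≤ x.val := (Fin.le_def).mp hbx
                omega
          have hb1 : 1 ≤ b.val := by omega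
          have hhead := hMV.2.2.1 b.val hb1 b.isLt
          have hcardH : (insert a S).card = b.val := by
            rw [hH, bzCardValFilter n (fun v => v < b.val)]
            have : (Finset.range n).filter (fun v => v < b.val) = Finset.range b.val := by
              ext v
              simp only [Finset.mem_filter, Finset.mem_range]
              constructor
              · exact fun h => h.2
              · intro h
                exact ⟨lt_of_lt_of_le h (le_of_lt b.isLt), h⟩
            rw [this, Finset.card_range]
          have hcardS : S.card = b.val - 1 := by
            have := Finset.card_insert_of_notMem haS
            omega
          have hcardSb : (insert b S).card = b.val := by
            rw [Finset.card_insert_of_notMem hbS, hcardS]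
            omega
          have hL1 := bzL1 hMV hmu (insert b S)
          rw [hcardSb] at hL1
          have hmueq : Finset.univ.filter (fun x : Fin n => x.val < b.val) = insert a S :=
            hH.symm
          rw [hmueq] at hL1 hhead
          have hsum1 : ∑ x ∈ insert a S, nu x = nu a + ∑ x ∈ S, nu x :=
            Finset.sum_insert haS
          have hsum2 : ∑ x ∈ insert b S, nu x = nu b + ∑ x ∈ S, nu x :=
            Finset.sum_insert hbS
          have hsum3 : ∑ x ∈ insert a S, (nu x - mu x)
              = (∑ x ∈ insert a S, nu x) - ∑ x ∈ insert a S, mu x :=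
            Finset.sum_sub_distrib _ _
          omega
lemma bzMle1 {n x X y z w : ℕ} (hx : x ≤ X) : bzM n x y z w ≤ bzM n X y z w := by
  have := Nat.mul_le_mul_right ((n+1)*(n+1)*(n+1)) hx
  unfold bzM
  omega

lemma bzFiltInsert {n : ℕ} (T : Finset (Fin n)) (y : Fin n) (p : Fin n → Prop)
    [DecidablePred p] (h : ¬ p y) : (insert y T).filter p = T.filter p := by
  rw [Finset.filter_insert, if_neg h]

lemma bzFiltErase {n : ℕ} (S : Finset (Fin n)) (c : Fin n) (p : Fin n → Prop)
    [DecidablePred p] (h : ¬ p c) : (S.erase c).filter p = S.filter p := by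
  rw [Finset.filter_erase, Finset.erase_eq_of_notMem]
  intro hmem
  exact h (Finset.mem_filter.mp hmem).2

/-- Exchange lemma LM2: `M(S∪b) ≤ M(S∪a)` for `a < b` not in `S`. -/
lemma bzLM2 {n : ℕ} {lam mu nu : Fin n → ℤ} {M : Finset (Fin n) → ℤ}
    (hMV : IsMVDatum n lam mu nu M)
    (hlam : ∀ a b : Fin n, a ≤ b → lam b ≤ lam a) :
    ∀ (N : ℕ) (S : Finset (Fin n)) (a b : Fin n), a ∉ S → b ∉ S → a < b →
      bzM n ((S.filter (fun x => a < x ∧ x < b)).card) (b.val - a.val)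
        ((Sᶜ.filter (fun x => b < x)).card) ((S.filter (fun x => x < a)).card) ≤ N →
      M (insert b S) ≤ M (insert a S) := by
  intro N
  induction N with
  | zero =>
    intro S a b haS hbS hab hm
    exfalso
    have h1 : 1 ≤ b.val - a.val := by
      have := (Fin.lt_def).mp hab
      omega
    have h2 : (n+1)*(n+1) ≤ (b.val - a.val) * ((n+1)*(n+1)) := by
      calc (n+1)*(n+1) = 1 * ((n+1)*(n+1)) := by ring
        _ ≤ (b.val - a.val) * ((n+1)*(n+1)) := Nat.mul_le_mul_right _ h1
    have h3 : 0 < (n+1)*(n+1) := Nat.mul_pos (Nat.succ_pos n) (Nat.succ_pos n)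
    unfold bzM at hm
    omega
  | succ N ih =>
    intro S a b haS hbS hab hm
    have hvab : a.val < b.val := (Fin.lt_def).mp hab
    by_cases hq4 : ∃ c, c ∈ S ∧ a < c ∧ c < b
    · obtain ⟨c, hcS, hac, hcb⟩ := hq4
      have hvac : a.val < c.val := (Fin.lt_def).mp hac
      have hvcb : c.val < b.val := (Fin.lt_def).mp hcb
      have hcmem : c ∈ S.filter (fun x => a < x ∧ x < b) :=
        Finset.mem_filter.mpr ⟨hcS, hac, hcb⟩
      set T := S.erase c with hT
      have haT : a ∉ T := fun h => haS (Finset.mem_of_mem_erase h)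
      have hbT : b ∉ T := fun h => hbS (Finset.mem_of_mem_erase h)
      have hcT : c ∉ T := Finset.notMem_erase c S
      have eS : insert c T = S := Finset.insert_erase hcS
      have hplk := hMV.1.2.1 T a c b hac hcb haT hcT hbT
      rw [Finset.insert_comm c b T, eS] at hplk
      have hsub1 : (S.filter (fun x => a < x ∧ x < c)).card
          < (S.filter (fun x => a < x ∧ x < b)).card := by
        apply Finset.card_lt_card
        constructor
        · intro y hy
          simp only [Finset.mem_filter] at hy ⊢
          exact ⟨hy.1, hy.2.1, lt_trans hy.2.2 hcb⟩
        · intro hss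
          have := hss hcmem
          simp only [Finset.mem_filter] at this
          exact lt_irrefl c this.2.2
      have hsub2 : (S.filter (fun x => c < x ∧ x < b)).card
          < (S.filter (fun x => a < x ∧ x < b)).card := by
        apply Finset.card_lt_card
        constructor
        · intro y hy
          simp only [Finset.mem_filter] at hy ⊢
          exact ⟨hy.1, lt_trans hac hy.2.1, hy.2.2⟩
        · intro hss
          have := hss hcmem
          simp only [Finset.mem_filter] at this
          exact lt_irrefl c this.2.1
      rcases min_choice (M (insert a S) + M (insert b T)) (M (insert a T) + M (insert b S))
        with hmin | hmin
      · rw [hmin] at hplk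
        have hanb : a ∉ insert b T := by
          simp only [Finset.mem_insert]
          push_neg
          exact ⟨ne_of_lt hab, haT⟩
        have hcnb : c ∉ insert b T := by
          simp only [Finset.mem_insert]
          push_neg
          exact ⟨ne_of_lt hcb, hcT⟩
        have hmeas1 : bzM n (((insert b T).filter (fun x => a < x ∧ x < c)).card)
            (c.val - a.val) (((insert b T)ᶜ.filter (fun x => c < x)).card)
            (((insert b T).filter (fun x => x < a)).card) ≤ N := by
          have e1 : ((insert b T).filter (fun x => a < x ∧ x < c)).card
              = (S.filter (fun x => a < x ∧ x < c)).card := by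
            rw [bzFiltInsert T b _ (fun h => absurd h.2 (not_lt.mpr hcb.le)),
              hT, bzFiltErase S c _ (fun h => lt_irrefl c h.2)]
          rw [e1]
          have := bzMlt1 (n := n)
            (y := c.val - a.val) (z := ((insert b T)ᶜ.filter (fun x => c < x)).card)
            (w := ((insert b T).filter (fun x => x < a)).card)
            (Y := b.val - a.val) (Z := (Sᶜ.filter (fun x => b < x)).card)
            (W := (S.filter (fun x => x < a)).card)
            hsub1 (by omega) (bzCardLe _ _) (bzCardLe _ _)
          omega
        have hs1 := ih (insert b T) a c hanb hcnb hac hmeas1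
        rw [Finset.insert_comm c b T, eS] at hs1
        have hmeas2 : bzM n ((T.filter (fun x => c < x ∧ x < b)).card)
            (b.val - c.val) ((Tᶜ.filter (fun x => b < x)).card)
            ((T.filter (fun x => x < c)).card) ≤ N := by
          have e1 : (T.filter (fun x => c < x ∧ x < b)).card
              = (S.filter (fun x => c < x ∧ x < b)).card := by
            rw [hT, bzFiltErase S c _ (fun h => lt_irrefl c h.1)]
          rw [e1]
          have := bzMlt1 (n := n)
            (y := b.val - c.val) (z := (Tᶜ.filter (fun x => b < x)).card)
            (w := (T.filter (fun x => x < c)).card)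
            (Y := b.val - a.val) (Z := (Sᶜ.filter (fun x => b < x)).card)
            (W := (S.filter (fun x => x < a)).card)
            hsub2 (by omega) (bzCardLe _ _) (bzCardLe _ _)
          omega
        have hs2 := ih T c b hcT hbT hcb hmeas2
        rw [eS] at hs2
        omega
      · rw [hmin] at hplk
        have hcna : c ∉ insert a T := by
          simp only [Finset.mem_insert]
          push_neg
          exact ⟨ne_of_gt hac, hcT⟩
        have hbna : b ∉ insert a T := by
          simp only [Finset.mem_insert]
          push_neg
          exact ⟨ne_of_gt hab, hbT⟩
        have hmeas1 : bzM n (((insert a T).filter (fun x => c < x ∧ x < b)).card)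
            (b.val - c.val) (((insert a T)ᶜ.filter (fun x => b < x)).card)
            (((insert a T).filter (fun x => x < c)).card) ≤ N := by
          have e1 : ((insert a T).filter (fun x => c < x ∧ x < b)).card
              = (S.filter (fun x => c < x ∧ x < b)).card := by
            rw [bzFiltInsert T a _ (fun h => absurd h.1 (not_lt.mpr hac.le)),
              hT, bzFiltErase S c _ (fun h => lt_irrefl c h.1)]
          rw [e1]
          have := bzMlt1 (n := n)
            (y := b.val - c.val) (z := ((insert a T)ᶜ.filter (fun x => b < x)).card)
            (w := ((insert a T).filter (fun x => x < c)).card)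
            (Y := b.val - a.val) (Z := (Sᶜ.filter (fun x => b < x)).card)
            (W := (S.filter (fun x => x < a)).card)
            hsub2 (by omega) (bzCardLe _ _) (bzCardLe _ _)
          omega
        have hs1 := ih (insert a T) c b hcna hbna hcb hmeas1
        rw [Finset.insert_comm c a T, Finset.insert_comm b a T, eS] at hs1
        have hmeas2 : bzM n ((T.filter (fun x => a < x ∧ x < c)).card)
            (c.val - a.val) ((Tᶜ.filter (fun x => c < x)).card)
            ((T.filter (fun x => x < a)).card) ≤ N := by
          have e1 : (T.filter (fun x => a < x ∧ x < c)).card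
              = (S.filter (fun x => a < x ∧ x < c)).card := by
            rw [hT, bzFiltErase S c _ (fun h => lt_irrefl c h.2)]
          rw [e1]
          have := bzMlt1 (n := n)
            (y := c.val - a.val) (z := (Tᶜ.filter (fun x => c < x)).card)
            (w := (T.filter (fun x => x < a)).card)
            (Y := b.val - a.val) (Z := (Sᶜ.filter (fun x => b < x)).card)
            (W := (S.filter (fun x => x < a)).card)
            hsub1 (by omega) (bzCardLe _ _) (bzCardLe _ _)
          omega
        have hs2 := ih T a c haT hcT hac hmeas2
        rw [eS] at hs2
        omega
    · by_cases hq3 : ∃ c, c ∉ S ∧ a < c ∧ c < b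
      · obtain ⟨c, hcS, hac, hcb⟩ := hq3
        have hvac : a.val < c.val := (Fin.lt_def).mp hac
        have hvcb : c.val < b.val := (Fin.lt_def).mp hcb
        have hfs1 : (S.filter (fun x => a < x ∧ x < c)).card
            ≤ (S.filter (fun x => a < x ∧ x < b)).card := by
          apply Finset.card_le_card
          intro y hy
          simp only [Finset.mem_filter] at hy ⊢
          exact ⟨hy.1, hy.2.1, lt_trans hy.2.2 hcb⟩
        have hfs2 : (S.filter (fun x => c < x ∧ x < b)).card
            ≤ (S.filter (fun x => a < x ∧ x < b)).card := by
          apply Finset.card_le_card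
          intro y hy
          simp only [Finset.mem_filter] at hy ⊢
          exact ⟨hy.1, lt_trans hac hy.2.1, hy.2.2⟩
        have hmeas1 : bzM n ((S.filter (fun x => a < x ∧ x < c)).card)
            (c.val - a.val) ((Sᶜ.filter (fun x => c < x)).card)
            ((S.filter (fun x => x < a)).card) ≤ N := by
          have h1 := bzMlt2 (n := n) (x := (S.filter (fun x => a < x ∧ x < c)).card)
            (y := c.val - a.val) (z := (Sᶜ.filter (fun x => c < x)).card)
            (w := (S.filter (fun x => x < a)).card)
            (Y := b.val - a.val) (Z := (Sᶜ.filter (fun x => b < x)).card)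
            (W := (S.filter (fun x => x < a)).card)
            (by omega) (bzCardLe _ _) (bzCardLe _ _)
          have h2 := bzMle1 (n := n) (y := b.val - a.val)
            (z := (Sᶜ.filter (fun x => b < x)).card)
            (w := (S.filter (fun x => x < a)).card) hfs1
          omega
        have hmeas2 : bzM n ((S.filter (fun x => c < x ∧ x < b)).card)
            (b.val - c.val) ((Sᶜ.filter (fun x => b < x)).card)
            ((S.filter (fun x => x < c)).card) ≤ N := by
          have h1 := bzMlt2 (n := n) (x := (S.filter (fun x => c < x ∧ x < b)).card)
            (y := b.val - c.val) (z := (Sᶜ.filter (fun x => b < x)).card)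
            (w := (S.filter (fun x => x < c)).card)
            (Y := b.val - a.val) (Z := (Sᶜ.filter (fun x => b < x)).card)
            (W := (S.filter (fun x => x < a)).card)
            (by omega) (bzCardLe _ _) (bzCardLe _ _)
          have h2 := bzMle1 (n := n) (y := b.val - a.val)
            (z := (Sᶜ.filter (fun x => b < x)).card)
            (w := (S.filter (fun x => x < a)).card) hfs2
          omega
        have h1 := ih S a c haS hcS hac hmeas1
        have h2 := ih S c b hcS hbS hcb hmeas2
        omega
      · by_cases hq1 : ∃ d, d ∉ S ∧ b < d
        · obtain ⟨d, hdS, hbd⟩ := hq1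
          have hdmem : d ∈ Sᶜ.filter (fun x => b < x) :=
            Finset.mem_filter.mpr ⟨Finset.mem_compl.mpr hdS, hbd⟩
          have hplk := hMV.1.2.1 S a b d hab hbd haS hbS hdS
          have key : M (insert a (insert d S)) + M (insert b S)
              ≤ M (insert a S) + M (insert b (insert d S)) := by
            rw [hplk]
            exact min_le_right _ _
          have hand : a ∉ insert d S := by
            simp only [Finset.mem_insert]
            push_neg
            exact ⟨ne_of_lt (lt_trans hab hbd), haS⟩
          have hbnd : b ∉ insert d S := by
            simp only [Finset.mem_insert]
            push_neg
            exact ⟨ne_of_lt hbd, hbS⟩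
          have hmeas : bzM n (((insert d S).filter (fun x => a < x ∧ x < b)).card)
              (b.val - a.val) (((insert d S)ᶜ.filter (fun x => b < x)).card)
              (((insert d S).filter (fun x => x < a)).card) ≤ N := by
            have e1 : ((insert d S).filter (fun x => a < x ∧ x < b)).card
                = (S.filter (fun x => a < x ∧ x < b)).card := by
              rw [bzFiltInsert S d _ (fun h => absurd h.2 (not_lt.mpr hbd.le))]
            have e2 : ((insert d S).filter (fun x => x < a)).card
                = (S.filter (fun x => x < a)).card := by
              rw [bzFiltInsert S d (fun x => x < a)
                (not_lt.mpr (le_of_lt (lt_trans hab hbd)))]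
            have e3 : ((insert d S)ᶜ.filter (fun x => b < x)).card
                = (Sᶜ.filter (fun x => b < x)).card - 1 := by
              rw [Finset.compl_insert, Finset.filter_erase, Finset.card_erase_of_mem hdmem]
            have hpos : 1 ≤ (Sᶜ.filter (fun x => b < x)).card :=
              Finset.card_pos.mpr ⟨d, hdmem⟩
            rw [e1, e2, e3]
            have := bzMlt3 (n := n) (x := (S.filter (fun x => a < x ∧ x < b)).card)
              (y := b.val - a.val) (z := (Sᶜ.filter (fun x => b < x)).card - 1)
              (w := (S.filter (fun x => x < a)).card)
              (Z := (Sᶜ.filter (fun x => b < x)).card)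
              (W := (S.filter (fun x => x < a)).card)
              (by omega) (bzCardLe _ _)
            omega
          have h1 := ih (insert d S) a b hand hbnd hab hmeas
          omega
        · by_cases hq2 : ∃ c, c ∈ S ∧ c < a
          · obtain ⟨c, hcS, hca⟩ := hq2
            have hcmem : c ∈ S.filter (fun x => x < a) :=
              Finset.mem_filter.mpr ⟨hcS, hca⟩
            set T := S.erase c with hT
            have haT : a ∉ T := fun h => haS (Finset.mem_of_mem_erase h)
            have hbT : b ∉ T := fun h => hbS (Finset.mem_of_mem_erase h)
            have hcT : c ∉ T := Finset.notMem_erase c S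
            have eS : insert c T = S := Finset.insert_erase hcS
            have hplk := hMV.1.2.1 T c a b hca hab hcT haT hbT
            have key : M (insert c (insert b T)) + M (insert a T)
                ≤ M (insert c (insert a T)) + M (insert b T) := by
              rw [hplk]
              exact min_le_left _ _
            rw [Finset.insert_comm c b T, Finset.insert_comm c a T, eS] at key
            have hmeas : bzM n ((T.filter (fun x => a < x ∧ x < b)).card)
                (b.val - a.val) ((Tᶜ.filter (fun x => b < x)).card)
                ((T.filter (fun x => x < a)).card) ≤ N := by
              have e1 : (T.filter (fun x => a < x ∧ x < b)).card
                  = (S.filter (fun x => a < x ∧ x < b)).card := by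
                rw [hT, bzFiltErase S c _ (fun h => absurd h.1 (not_lt.mpr hca.le))]
              have e2 : (Tᶜ.filter (fun x => b < x)).card
                  = (Sᶜ.filter (fun x => b < x)).card := by
                rw [hT, Finset.compl_erase, bzFiltInsert Sᶜ c (fun x => b < x)
                  (not_lt.mpr (le_of_lt (lt_trans hca hab)))]
              have e3 : (T.filter (fun x => x < a)).card
                  = (S.filter (fun x => x < a)).card - 1 := by
                rw [hT, Finset.filter_erase, Finset.card_erase_of_mem hcmem]
              have hpos : 1 ≤ (S.filter (fun x => x < a)).card :=
                Finset.card_pos.mpr ⟨c, hcmem⟩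
              rw [e1, e2, e3]
              have := bzMlt4 (n := n) (x := (S.filter (fun x => a < x ∧ x < b)).card)
                (y := b.val - a.val) (z := (Sᶜ.filter (fun x => b < x)).card)
                (w := (S.filter (fun x => x < a)).card - 1)
                (W := (S.filter (fun x => x < a)).card)
                (by omega)
              omega
            have h1 := ih T a b haT hbT hab hmeas
            omega
          · -- base case: S = {x | b < x}; use tail boundary + L2
            push_neg at hq4 hq3 hq1 hq2
            have hS : S = Finset.univ.filter (fun x : Fin n => b < x) := by
              ext x
              simp only [Finset.mem_filter, Finset.mem_univ, true_and]
              constructor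
              · intro hxS
                have hax : a ≤ x := hq2 x hxS
                have hxa : x ≠ a := fun h => haS (h ▸ hxS)
                have h1 : a < x := lt_of_le_of_ne hax (Ne.symm hxa)
                have h2 : b ≤ x := hq4 x hxS h1
                have hxb : x ≠ b := fun h => hbS (h ▸ hxS)
                exact lt_of_le_of_ne h2 (Ne.symm hxb)
              · intro hbx
                by_contra hxS
                exact absurd hbx (not_lt.mpr (hq1 x hxS))
            have hSb : insert b S = Finset.univ.filter (fun x : Fin n => b.val ≤ x.val) := by
              rw [hS]
              ext x
              simp only [Finset.mem_insert, Finset.mem_filter, Finset.mem_univ, true_and]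
              constructor
              · rintro (rfl | hx)
                · exact le_refl _
                · exact le_of_lt ((Fin.lt_def).mp hx)
              · intro hx
                rcases eq_or_lt_of_le hx with h | h
                · exact Or.inl (Fin.ext h.symm)
                · exact Or.inr ((Fin.lt_def).mpr h)
            have htail := hMV.2.1 b.val b.isLt
            have hcardS : S.card = n - b.val - 1 := by
              rw [hS]
              have e1 : (Finset.univ.filter (fun x : Fin n => b < x)).card
                  = (Finset.univ.filter (fun x : Fin n => b.val < x.val)).card := rfl
              rw [e1, bzCardValFilter n (fun v => b.val < v)]
              have e2 : (Finset.range n).filter (fun v => b.val < v)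
                  = Finset.Ico (b.val + 1) n := by
                ext v
                simp only [Finset.mem_filter, Finset.mem_range, Finset.mem_Ico]
                omega
              rw [e2, Nat.card_Ico]
              omega
            have hcardSa : (insert a S).card = n - b.val := by
              rw [Finset.card_insert_of_notMem haS, hcardS]
              have := b.isLt
              omega
            have hL2 := bzL2 hMV hlam (insert a S)
            rw [hcardSa] at hL2
            have e3 : n - (n - b.val) = b.val := by
              have := b.isLt
              omega
            rw [e3] at hL2
            have e4 : Finset.univ.filter (fun x : Fin n => b.val ≤ x.val)
                = Finset.univ.filter (fun a : Fin n => b.val ≤ a.val) := rfl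
            rw [← hSb] at htail hL2
            omega
lemma bzPotLt {n F' F T1' T1 : ℕ} (hF : F' < F) (hT : T1' ≤ n*n) :
    F' * (n*n+1) + T1' < F * (n*n+1) + T1 := by
  have h1 : (F' + 1) * (n*n+1) ≤ F * (n*n+1) := Nat.mul_le_mul_right _ hF
  have h2 : (F' + 1) * (n*n+1) = F' * (n*n+1) + (n*n+1) := by ring
  omega

lemma bzSumValLe {n : ℕ} (γ : Finset (Fin n)) : ∑ x ∈ γ, x.val ≤ n * n := by
  calc ∑ x ∈ γ, x.val ≤ γ.card • n :=
        Finset.sum_le_card_nsmul γ (fun x => x.val) n (fun x _ => le_of_lt x.isLt)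
    _ = γ.card * n := smul_eq_mul ..
    _ ≤ n * n := Nat.mul_le_mul_right _ (by simpa using Finset.card_le_univ γ)

lemma bzCardLtVal {n : ℕ} (a : Fin n) :
    (Finset.univ.filter (fun x : Fin n => x < a)).card = a.val := by
  have e1 : (Finset.univ.filter (fun x : Fin n => x < a)).card
      = (Finset.univ.filter (fun x : Fin n => x.val < a.val)).card := rfl
  rw [e1, bzCardValFilter n (fun v => v < a.val)]
  have e2 : (Finset.range n).filter (fun v => v < a.val) = Finset.range a.val := by
    ext v
    simp only [Finset.mem_filter, Finset.mem_range]
    have := a.isLt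
    omega
  rw [e2, Finset.card_range]

lemma bzSumLeK {n : ℕ} {α β : Finset (Fin n)} (h : Disjoint α β) :
    ∑ a ∈ α, a.val + ∑ b ∈ β, b.val ≤ ∑ x : Fin n, x.val := by
  rw [← Finset.sum_union h]
  exact Finset.sum_le_sum_of_subset (Finset.subset_univ _)

/-- The descent argument: the value `M α + Σ_β ν` is minimized at the interval pair. -/
lemma bzDescent {n : ℕ} {lam mu nu : Fin n → ℤ} {M : Finset (Fin n) → ℤ}
    (hMV : IsMVDatum n lam mu nu M)
    (hlam : ∀ a b : Fin n, a ≤ b → lam b ≤ lam a)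
    (hmu : ∀ a b : Fin n, a ≤ b → mu b ≤ mu a)
    (hnu : ∀ a b : Fin n, a ≤ b → nu b ≤ nu a)
    (i j k : ℕ) (hijk : i + j + k = n) :
    ∀ (Φ : ℕ) (α β : Finset (Fin n)), Disjoint α β → α.card = i → β.card = j →
      ((∑ x : Fin n, x.val) - (∑ a ∈ α, a.val + ∑ b ∈ β, b.val)) * (n*n+1)
        + (∑ a ∈ α, a.val) ≤ Φ →
      M (intervalFinset n k i) + tailSum n nu (k + i)
        ≤ M α + ∑ b ∈ β, nu b := by
  intro Φ
  induction Φ using Nat.strong_induction_on with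
  | _ Φ ih =>
  intro α β hdisj hca hcb hpot
  by_cases hA : ∃ b ∈ β, ∃ c : Fin n, (c ∉ α ∧ c ∉ β) ∧ b < c
  · obtain ⟨b, hbβ, c, ⟨hcα, hcβ⟩, hbc⟩ := hA
    have hcne : c ∉ β.erase b := fun h => hcβ (Finset.mem_of_mem_erase h)
    have hdisj' : Disjoint α (insert c (β.erase b)) := by
      rw [Finset.disjoint_left]
      intro x hxα hxβ'
      rcases Finset.mem_insert.mp hxβ' with rfl | hx
      · exact hcα hxα
      · exact Finset.disjoint_left.mp hdisj hxα (Finset.mem_of_mem_erase hx)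
    have hj1 : 1 ≤ j := by
      rw [← hcb]
      exact Finset.card_pos.mpr ⟨b, hbβ⟩
    have hcb' : (insert c (β.erase b)).card = j := by
      rw [Finset.card_insert_of_notMem hcne, Finset.card_erase_of_mem hbβ, hcb]
      omega
    have hsb : b.val + ∑ x ∈ β.erase b, x.val = ∑ x ∈ β, x.val :=
      Finset.add_sum_erase β (fun x => x.val) hbβ
    have hsβ' : ∑ x ∈ insert c (β.erase b), x.val = c.val + ∑ x ∈ β.erase b, x.val :=
      Finset.sum_insert hcne
    have hK0 := bzSumLeK hdisj
    have hK1 := bzSumLeK hdisj'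
    have hvbc : b.val < c.val := (Fin.lt_def).mp hbc
    have hFlt : (∑ x : Fin n, x.val) - (∑ a ∈ α, a.val + ∑ x ∈ insert c (β.erase b), x.val)
        < (∑ x : Fin n, x.val) - (∑ a ∈ α, a.val + ∑ b ∈ β, b.val) := by
      omega
    have hplt := bzPotLt (n := n) (T1' := ∑ a ∈ α, a.val) (T1 := ∑ a ∈ α, a.val)
      hFlt (bzSumValLe α)
    have hrec := ih (((∑ x : Fin n, x.val)
        - (∑ a ∈ α, a.val + ∑ x ∈ insert c (β.erase b), x.val)) * (n*n+1)
        + (∑ a ∈ α, a.val)) (by omega) α (insert c (β.erase b)) hdisj' hca hcb' (le_refl _)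
    have hnuv : nu c ≤ nu b := hnu b c (le_of_lt hbc)
    have hsnu : ∑ x ∈ insert c (β.erase b), nu x = nu c + ∑ x ∈ β.erase b, nu x :=
      Finset.sum_insert hcne
    have hsnu2 : nu b + ∑ x ∈ β.erase b, nu x = ∑ x ∈ β, nu x :=
      Finset.add_sum_erase β nu hbβ
    omega
  · by_cases hB : ∃ a ∈ α, ∃ c : Fin n, (c ∉ α ∧ c ∉ β) ∧ a < c
    · obtain ⟨a, haα, c, ⟨hcα, hcβ⟩, hac⟩ := hB
      have hcne : c ∉ α.erase a := fun h => hcα (Finset.mem_of_mem_erase h)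
      have hane : a ∉ α.erase a := Finset.notMem_erase a α
      have heα : insert a (α.erase a) = α := Finset.insert_erase haα
      have hdisj' : Disjoint (insert c (α.erase a)) β := by
        rw [Finset.disjoint_left]
        intro x hxα' hxβ
        rcases Finset.mem_insert.mp hxα' with rfl | hx
        · exact hcβ hxβ
        · exact Finset.disjoint_left.mp hdisj (Finset.mem_of_mem_erase hx) hxβ
      have hi1 : 1 ≤ i := by
        rw [← hca]
        exact Finset.card_pos.mpr ⟨a, haα⟩
      have hca' : (insert c (α.erase a)).card = i := by
        rw [Finset.card_insert_of_notMem hcne, Finset.card_erase_of_mem haα, hca]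
        omega
      have hsa : a.val + ∑ x ∈ α.erase a, x.val = ∑ x ∈ α, x.val :=
        Finset.add_sum_erase α (fun x => x.val) haα
      have hsα' : ∑ x ∈ insert c (α.erase a), x.val = c.val + ∑ x ∈ α.erase a, x.val :=
        Finset.sum_insert hcne
      have hK0 := bzSumLeK hdisj
      have hK1 := bzSumLeK hdisj'
      have hvac : a.val < c.val := (Fin.lt_def).mp hac
      have hFlt : (∑ x : Fin n, x.val)
          - (∑ x ∈ insert c (α.erase a), x.val + ∑ b ∈ β, b.val)
          < (∑ x : Fin n, x.val) - (∑ a ∈ α, a.val + ∑ b ∈ β, b.val) := by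
        omega
      have hplt := bzPotLt (n := n) (T1' := ∑ x ∈ insert c (α.erase a), x.val)
        (T1 := ∑ a ∈ α, a.val) hFlt (bzSumValLe _)
      have hrec := ih (((∑ x : Fin n, x.val)
          - (∑ x ∈ insert c (α.erase a), x.val + ∑ b ∈ β, b.val)) * (n*n+1)
          + (∑ x ∈ insert c (α.erase a), x.val)) (by omega)
        (insert c (α.erase a)) β hdisj' hca' hcb (le_refl _)
      have hM := bzLM2 hMV hlam
        (bzM n (((α.erase a).filter (fun x => a < x ∧ x < c)).card) (c.val - a.val)
          (((α.erase a)ᶜ.filter (fun x => c < x)).card)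
          (((α.erase a).filter (fun x => x < a)).card))
        (α.erase a) a c hane hcne hac (le_refl _)
      rw [heα] at hM
      omega
    · by_cases hC : ∃ a ∈ α, ∃ b ∈ β, b < a
      · obtain ⟨a, haα, b, hbβ, hba⟩ := hC
        have hbα : b ∉ α := Finset.disjoint_right.mp hdisj hbβ
        have haβ : a ∉ β := Finset.disjoint_left.mp hdisj haα
        have hbne : b ∉ α.erase a := fun h => hbα (Finset.mem_of_mem_erase h)
        have hane : a ∉ α.erase a := Finset.notMem_erase a α
        have hane2 : a ∉ β.erase b := fun h => haβ (Finset.mem_of_mem_erase h)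
        have heα : insert a (α.erase a) = α := Finset.insert_erase haα
        have hdisj' : Disjoint (insert b (α.erase a)) (insert a (β.erase b)) := by
          rw [Finset.disjoint_left]
          intro x hxα' hxβ'
          rcases Finset.mem_insert.mp hxα' with rfl | hx
          · rcases Finset.mem_insert.mp hxβ' with h | h
            · exact absurd h (ne_of_lt hba)
            · exact (Finset.notMem_erase _ _) h
          · rcases Finset.mem_insert.mp hxβ' with rfl | h
            · exact hane hx
            · exact Finset.disjoint_left.mp hdisj (Finset.mem_of_mem_erase hx)
                (Finset.mem_of_mem_erase h)
        have hi1 : 1 ≤ i := by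
          rw [← hca]
          exact Finset.card_pos.mpr ⟨a, haα⟩
        have hj1 : 1 ≤ j := by
          rw [← hcb]
          exact Finset.card_pos.mpr ⟨b, hbβ⟩
        have hca' : (insert b (α.erase a)).card = i := by
          rw [Finset.card_insert_of_notMem hbne, Finset.card_erase_of_mem haα, hca]
          omega
        have hcb' : (insert a (β.erase b)).card = j := by
          rw [Finset.card_insert_of_notMem hane2, Finset.card_erase_of_mem hbβ, hcb]
          omega
        have hsa : a.val + ∑ x ∈ α.erase a, x.val = ∑ x ∈ α, x.val :=
          Finset.add_sum_erase α (fun x => x.val) haα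
        have hsb : b.val + ∑ x ∈ β.erase b, x.val = ∑ x ∈ β, x.val :=
          Finset.add_sum_erase β (fun x => x.val) hbβ
        have hsα' : ∑ x ∈ insert b (α.erase a), x.val = b.val + ∑ x ∈ α.erase a, x.val :=
          Finset.sum_insert hbne
        have hsβ' : ∑ x ∈ insert a (β.erase b), x.val = a.val + ∑ x ∈ β.erase b, x.val :=
          Finset.sum_insert hane2
        have hvba : b.val < a.val := (Fin.lt_def).mp hba
        have hK0 := bzSumLeK hdisj
        have hFF : (∑ x : Fin n, x.val)
            - (∑ x ∈ insert b (α.erase a), x.val + ∑ x ∈ insert a (β.erase b), x.val)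
            = (∑ x : Fin n, x.val) - (∑ a ∈ α, a.val + ∑ b ∈ β, b.val) := by
          omega
        have hplt : ((∑ x : Fin n, x.val)
            - (∑ x ∈ insert b (α.erase a), x.val + ∑ x ∈ insert a (β.erase b), x.val))
              * (n*n+1) + (∑ x ∈ insert b (α.erase a), x.val)
            < ((∑ x : Fin n, x.val) - (∑ a ∈ α, a.val + ∑ b ∈ β, b.val)) * (n*n+1)
              + (∑ a ∈ α, a.val) := by
          rw [hFF]
          omega
        have hrec := ih (((∑ x : Fin n, x.val)
            - (∑ x ∈ insert b (α.erase a), x.val + ∑ x ∈ insert a (β.erase b), x.val))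
              * (n*n+1) + (∑ x ∈ insert b (α.erase a), x.val)) (by omega)
          (insert b (α.erase a)) (insert a (β.erase b)) hdisj' hca' hcb' (le_refl _)
        have hM := bzLM3 hMV hmu
          (bzM n 0 (a.val - b.val) (((α.erase a).filter (fun x => a < x)).card)
            (((α.erase a)ᶜ.filter (fun x => x < b)).card))
          (α.erase a) b a hbne hane hba (le_refl _)
        rw [heα] at hM
        -- hM : M (insert b (α.erase a)) + nu a ≤ M α + nu b
        have hsnu : ∑ x ∈ insert a (β.erase b), nu x = nu a + ∑ x ∈ β.erase b, nu x :=
          Finset.sum_insert hane2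
        have hsnu2 : nu b + ∑ x ∈ β.erase b, nu x = ∑ x ∈ β, nu x :=
          Finset.add_sum_erase β nu hbβ
        omega
      · -- terminal: α is the interval, β is the tail
        push_neg at hA hB hC
        have hfreecard : ((α ∪ β)ᶜ).card = k := by
          rw [Finset.card_compl, Finset.card_union_of_disjoint hdisj, hca, hcb]
          simp only [Fintype.card_fin]
          omega
        have hαsub : α ⊆ intervalFinset n k i := by
          intro a haα
          have hfree_lt : ∀ c ∈ (α ∪ β)ᶜ, c < a := by
            intro c hc
            have hcα : c ∉ α := fun h => (Finset.mem_compl.mp hc) (Finset.mem_union_left _ h)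
            have hcβ : c ∉ β := fun h => (Finset.mem_compl.mp hc) (Finset.mem_union_right _ h)
            have h1 : c ≤ a := hB a haα c ⟨hcα, hcβ⟩
            exact lt_of_le_of_ne h1 (fun h => hcα (h ▸ haα))
          have hsub1 : (α ∪ β)ᶜ ⊆ Finset.univ.filter (fun x : Fin n => x < a) :=
            fun c hc => Finset.mem_filter.mpr ⟨Finset.mem_univ _, hfree_lt c hc⟩
          have hk_le : k ≤ a.val := by
            rw [← hfreecard, ← bzCardLtVal a]
            exact Finset.card_le_card hsub1
          have hsub2 : Finset.univ.filter (fun x : Fin n => x < a)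
              ⊆ (α ∪ β)ᶜ ∪ α.erase a := by
            intro x hx
            have hxa : x < a := (Finset.mem_filter.mp hx).2
            by_cases hxβ : x ∈ β
            · exact absurd hxa (not_lt.mpr (hC a haα x hxβ))
            · by_cases hxα : x ∈ α
              · exact Finset.mem_union_right _
                  (Finset.mem_erase.mpr ⟨ne_of_lt hxa, hxα⟩)
              · exact Finset.mem_union_left _ (Finset.mem_compl.mpr (fun h => by
                  rcases Finset.mem_union.mp h with h' | h'
                  · exact hxα h'
                  · exact hxβ h'))
          have hup : a.val < k + i := by
            have h1 : (Finset.univ.filter (fun x : Fin n => x < a)).card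
                ≤ ((α ∪ β)ᶜ ∪ α.erase a).card := Finset.card_le_card hsub2
            have h2 : ((α ∪ β)ᶜ ∪ α.erase a).card
                ≤ ((α ∪ β)ᶜ).card + (α.erase a).card := Finset.card_union_le _ _
            have h3 : (α.erase a).card = i - 1 := by
              rw [Finset.card_erase_of_mem haα, hca]
            have hi1 : 1 ≤ i := by
              rw [← hca]
              exact Finset.card_pos.mpr ⟨a, haα⟩
            rw [bzCardLtVal a] at h1
            omega
          unfold intervalFinset
          exact Finset.mem_filter.mpr ⟨Finset.mem_univ _, hk_le, hup⟩
        have hβsub : β ⊆ Finset.univ.filter (fun x : Fin n => k + i ≤ x.val) := by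
          intro b hbβ
          have hsub1 : (α ∪ β)ᶜ ∪ α ⊆ Finset.univ.filter (fun x : Fin n => x < b) := by
            intro x hx
            apply Finset.mem_filter.mpr
            refine ⟨Finset.mem_univ _, ?_⟩
            rcases Finset.mem_union.mp hx with h | h
            · have hxα : x ∉ α := fun h' => (Finset.mem_compl.mp h) (Finset.mem_union_left _ h')
              have hxβ : x ∉ β := fun h' => (Finset.mem_compl.mp h) (Finset.mem_union_right _ h')
              have h1 : x ≤ b := hA b hbβ x ⟨hxα, hxβ⟩
              exact lt_of_le_of_ne h1 (fun h' => hxβ (h' ▸ hbβ))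
            · have h1 : x ≤ b := hC x h b hbβ
              exact lt_of_le_of_ne h1
                (fun h' => (Finset.disjoint_left.mp hdisj h) (h' ▸ hbβ))
          have hdisj2 : Disjoint ((α ∪ β)ᶜ) α :=
            Finset.disjoint_left.mpr
              (fun x hx h' => (Finset.mem_compl.mp hx) (Finset.mem_union_left _ h'))
          have h1 : ((α ∪ β)ᶜ ∪ α).card = k + i := by
            rw [Finset.card_union_of_disjoint hdisj2, hfreecard, hca]
          have h2 := Finset.card_le_card hsub1
          rw [h1, bzCardLtVal b] at h2
          exact Finset.mem_filter.mpr ⟨Finset.mem_univ _, h2⟩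
        have hicard : (intervalFinset n k i).card = i := by
          unfold intervalFinset
          rw [bzCardValFilter n (fun v => k ≤ v ∧ v < k + i)]
          have e2 : (Finset.range n).filter (fun v => k ≤ v ∧ v < k + i)
              = Finset.Ico k (k + i) := by
            ext v
            simp only [Finset.mem_filter, Finset.mem_range, Finset.mem_Ico]
            omega
          rw [e2, Nat.card_Ico]
          omega
        have htcard : (Finset.univ.filter (fun x : Fin n => k + i ≤ x.val)).card = j := by
          rw [bzCardValFilter n (fun v => k + i ≤ v)]
          have e2 : (Finset.range n).filter (fun v => k + i ≤ v) = Finset.Ico (k + i) n := by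
            ext v
            simp only [Finset.mem_filter, Finset.mem_range, Finset.mem_Ico]
            omega
          rw [e2, Nat.card_Ico]
          omega
        have hαeq : α = intervalFinset n k i :=
          Finset.eq_of_subset_of_card_le hαsub (by rw [hicard, hca])
        have hβeq : β = Finset.univ.filter (fun x : Fin n => k + i ≤ x.val) :=
          Finset.eq_of_subset_of_card_le hβsub (by rw [htcard, hcb])
        have e1 : tailSum n nu (k + i) = ∑ b ∈ β, nu b := by
          rw [hβeq]
          rfl
        have e2 : M α = M (intervalFinset n k i) := by rw [hαeq]
        omega

/-- For `M ∈ MV_{λμ}^ν` and `i + j + k = n`, the minimum of `M(α) + Σ_{b∈β} ν_b` over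
pairs of disjoint subsets `α, β ⊆ {1,…,n}` with `|α| = i`, `|β| = j` equals
`M({k+1,…,k+i}) + ν_{k+i+1} + … + ν_n`; it is attained at `α = {k+1,…,k+i}`,
`β = {k+i+1,…,n}` (which form an admissible pair, as the first three conjuncts record). -/
theorem min_over_disjoint_pairs
    (n : ℕ) (hn : 1 ≤ n) (lam mu nu : Fin n → ℤ)
    (hlam : ∀ a b : Fin n, a ≤ b → lam b ≤ lam a)
    (hmu : ∀ a b : Fin n, a ≤ b → mu b ≤ mu a)
    (hnu : ∀ a b : Fin n, a ≤ b → nu b ≤ nu a)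
    (hsum : (∑ a, lam a) = (∑ a, nu a) - ∑ a, mu a)
    (M : Finset (Fin n) → ℤ) (hMV : IsMVDatum n lam mu nu M) :
    ∀ i j k : ℕ, i + j + k = n →
      (intervalFinset n k i).card = i ∧
      (Finset.univ.filter fun a : Fin n => k + i ≤ a.val).card = j ∧
      Disjoint (intervalFinset n k i)
        (Finset.univ.filter fun a : Fin n => k + i ≤ a.val) ∧
      (∀ α β : Finset (Fin n), Disjoint α β → α.card = i → β.card = j →
        M (intervalFinset n k i) + tailSum n nu (k + i) ≤ M α + ∑ b ∈ β, nu b) := by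
  intro i j k hijk
  refine ⟨?_, ?_, ?_, ?_⟩
  · unfold intervalFinset
    rw [bzCardValFilter n (fun v => k ≤ v ∧ v < k + i)]
    have e2 : (Finset.range n).filter (fun v => k ≤ v ∧ v < k + i)
        = Finset.Ico k (k + i) := by
      ext v
      simp only [Finset.mem_filter, Finset.mem_range, Finset.mem_Ico]
      omega
    rw [e2, Nat.card_Ico]
    omega
  · rw [bzCardValFilter n (fun v => k + i ≤ v)]
    have e2 : (Finset.range n).filter (fun v => k + i ≤ v) = Finset.Ico (k + i) n := by
      ext v
      simp only [Finset.mem_filter, Finset.mem_range, Finset.mem_Ico]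
      omega
    rw [e2, Nat.card_Ico]
    omega
  · rw [Finset.disjoint_left]
    intro x hx1 hx2
    unfold intervalFinset at hx1
    simp only [Finset.mem_filter, Finset.mem_univ, true_and] at hx1 hx2
    omega
  · intro α β hdisj hcα hcβ
    exact bzDescent hMV hlam hmu hnu i j k hijk
      (((∑ x : Fin n, x.val) - (∑ a ∈ α, a.val + ∑ b ∈ β, b.val)) * (n*n+1)
        + (∑ a ∈ α, a.val)) α β hdisj hcα hcβ (le_refl _)
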